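/- Let (Ω, σ) be a measure space, 1 < p < ∞, 0 < q < p, and let a : ℤ → [0,∞). Suppose there is a constant C > 0 such that a_j ≤ C·(2^{j(1-p)}·a_{j-1})^{q/p} for all j ∈ ℤ, and suppose M := sup_{j∈ℤ} 2^{j·q(p-1)/(p-q)}·a_j < ∞. Then M ≤ (2^{q(p-1)/(p-q)}·C·2^{q(p-1)/p})^{p/(p-q)}. -/

import Mathlib

open ENNReal

/-- Dyadic iteration/absorption argument in the proof of Theorem 5.1. -/
theorem stmt_5 (p q : ℝ) (hp : 1 < p) (hq : 0 < q) (hqp : q < p)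
    (a : ℤ → ℝ≥0∞) (C : ℝ≥0∞) (hC : 0 < C)
    (hrec : ∀ j : ℤ, a j ≤ C * ((2 : ℝ≥0∞) ^ ((j : ℝ) * (1 - p)) * a (j - 1)) ^ (q / p))
    (hM : (⨆ j : ℤ, (2 : ℝ≥0∞) ^ ((j : ℝ) * (q * (p - 1) / (p - q))) * a j) < ⊤) :
    (⨆ j : ℤ, (2 : ℝ≥0∞) ^ ((j : ℝ) * (q * (p - 1) / (p - q))) * a j)
      ≤ ((2 : ℝ≥0∞) ^ (q * (p - 1) / (p - q)) * C * (2 : ℝ≥0∞) ^ (q * (p - 1) / p))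
          ^ (p / (p - q)) := by
  set α : ℝ := q * (p - 1) / (p - q) with hα
  set β : ℝ := q * (p - 1) / p with hβ
  set M : ℝ≥0∞ := ⨆ j : ℤ, (2 : ℝ≥0∞) ^ ((j : ℝ) * α) * a j with hMdef
  have hpq : 0 < p - q := by linarith
  have hp0 : 0 < p := by linarith
  have hβ0 : 0 ≤ β := div_nonneg (mul_nonneg hq.le (by linarith)) hp0.le
  have h2top : ∀ r : ℝ, (2 : ℝ≥0∞) ^ r ≠ ⊤ := fun r => by
    simp [ENNReal.rpow_eq_top_iff]
  have h2pos : ∀ r : ℝ, 0 < (2 : ℝ≥0∞) ^ r := fun r =>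
    ENNReal.rpow_pos (by norm_num) (by norm_num)
  -- if C = ⊤ the RHS is ⊤
  rcases eq_or_ne C ⊤ with hCtop | hCne
  · have : (2 : ℝ≥0∞) ^ α * C * (2 : ℝ≥0∞) ^ β = ⊤ := by
      rw [hCtop, ENNReal.mul_top (h2pos α).ne', ENNReal.top_mul (h2pos β).ne']
    rw [this, ENNReal.top_rpow_of_pos (by positivity)]
    exact le_top
  have hMne : M ≠ ⊤ := hM.ne
  have ha : ∀ j : ℤ, a j ≠ ⊤ := by
    intro j htop
    apply hMne
    have hle : (2 : ℝ≥0∞) ^ ((j : ℝ) * α) * a j ≤ M :=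
      le_iSup (fun j : ℤ => (2 : ℝ≥0∞) ^ ((j : ℝ) * α) * a j) j
    rw [htop, ENNReal.mul_top (h2pos _).ne'] at hle
    exact top_le_iff.mp hle
  set K : ℝ≥0∞ := (2 : ℝ≥0∞) ^ α * C * (2 : ℝ≥0∞) ^ β with hK
  -- Key bound: M ≤ K * M ^ (q/p)
  have key : M ≤ K * M ^ (q / p) := by
    rw [hMdef]
    apply iSup_le
    intro j
    calc (2 : ℝ≥0∞) ^ ((j : ℝ) * α) * a j
        ≤ (2 : ℝ≥0∞) ^ ((j : ℝ) * α) *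
            (C * ((2 : ℝ≥0∞) ^ ((j : ℝ) * (1 - p)) * a (j - 1)) ^ (q / p)) := by
          gcongr
          exact hrec j
      _ = (2 : ℝ≥0∞) ^ ((j : ℝ) * α + (j : ℝ) * (1 - p) * (q / p)) * C *
            (a (j - 1)) ^ (q / p) := by
          rw [ENNReal.mul_rpow_of_ne_top (h2top _) (ha _), ← ENNReal.rpow_mul,
            ENNReal.rpow_add _ _ (by norm_num) (by norm_num)]
          ring
      _ ≤ (2 : ℝ≥0∞) ^ (α + β + ((j : ℝ) - 1) * α * (q / p)) * C *
            (a (j - 1)) ^ (q / p) := by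
          have hid : α + β + ((j : ℝ) - 1) * α * (q / p)
              = ((j : ℝ) * α + (j : ℝ) * (1 - p) * (q / p)) + 2 * β := by
            rw [hα, hβ]
            field_simp
            ring
          have hle : (j : ℝ) * α + (j : ℝ) * (1 - p) * (q / p)
              ≤ α + β + ((j : ℝ) - 1) * α * (q / p) := by
            rw [hid]; linarith
          exact mul_le_mul_left (mul_le_mul_left
            (ENNReal.rpow_le_rpow_of_exponent_le (by norm_num) hle) C) _
      _ = K * (((2 : ℝ≥0∞) ^ (((j : ℝ) - 1) * α) * a (j - 1)) ^ (q / p)) := by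
          rw [ENNReal.mul_rpow_of_ne_top (h2top _) (ha _), ← ENNReal.rpow_mul, hK,
            ENNReal.rpow_add _ _ (by norm_num) (by norm_num),
            ENNReal.rpow_add _ _ (by norm_num) (by norm_num)]
          ring
      _ ≤ K * M ^ (q / p) := by
          gcongr
          have := le_iSup (fun j : ℤ => (2 : ℝ≥0∞) ^ ((j : ℝ) * α) * a j) (j - 1)
          rw [← hMdef] at this
          convert this using 3
          rfl
          push_cast
          ring
  -- absorption
  rcases eq_or_ne M 0 with hM0 | hM0
  · rw [hM0]
    exact zero_le
  have hMqp_ne0 : M ^ (q / p) ≠ 0 := (ENNReal.rpow_pos (zero_lt_iff.mpr hM0) hMne).ne'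
  have hMqp_netop : M ^ (q / p) ≠ ⊤ :=
    ENNReal.rpow_ne_top_of_nonneg (by positivity) hMne
  have hstep : M ^ ((p - q) / p) ≤ K := by
    rw [← ENNReal.mul_le_mul_iff_left hMqp_ne0 hMqp_netop,
      ← ENNReal.rpow_add _ _ hM0 hMne]
    have : (p - q) / p + q / p = 1 := by field_simp; ring
    rw [this, ENNReal.rpow_one]
    exact key
  have hMeq : M = (M ^ ((p - q) / p)) ^ (p / (p - q)) := by
    rw [← ENNReal.rpow_mul]
    have : (p - q) / p * (p / (p - q)) = 1 := by field_simp
    rw [this, ENNReal.rpow_one]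
  rw [hMeq]
  exact ENNReal.rpow_le_rpow hstep (by positivity)
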